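/- arXiv:1208.5325 — 3 statements merged into one kernel-verified Lean document; each statement's English description precedes it below -/
import Mathlib

section
/- For every k ≥ 1, among all perfect pairings (partitions into pairs) of the 2k points 1, 2, ..., 2k arranged in convex position (e.g., on a circle), the number of pairings with an even number of crossing pairs exceeds the number of pairings with an odd number of crossing pairs by exactly 1. Here two pairs {a,b} and {c,d} with a<b, c<d cross if a<c<b<d or c<a<d<b. -/
open scoped Classical

def IsPairing (k : ℕ) (M : Finset (Finset (Fin (2*k)))) : Prop :=
  (∀ p ∈ M, p.card = 2) ∧ ∀ v : Fin (2*k), ∃! p, p ∈ M ∧ v ∈ p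

def CrossOrd {k : ℕ} (p q : Finset (Fin (2*k))) : Prop :=
  ∃ a b c d : Fin (2*k), a < b ∧ c < d ∧ p = {a, b} ∧ q = {c, d} ∧
    a < c ∧ c < b ∧ b < d

noncomputable def crossNum {k : ℕ} (M : Finset (Finset (Fin (2*k)))) : ℕ :=
  ((M ×ˢ M).filter (fun pq => CrossOrd pq.1 pq.2)).card

-- basic doubleton lemmas
lemma pair_eq_pair {k : ℕ} {a b u v : Fin (2*k)} (hab : a < b) (huv : u < v)
    (h : ({a,b} : Finset (Fin (2*k))) = {u,v}) : a = u ∧ b = v := by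
  have ha : a ∈ ({u,v} : Finset (Fin (2*k))) := h ▸ (by simp)
  have hb : b ∈ ({u,v} : Finset (Fin (2*k))) := h ▸ (by simp)
  have hu : u ∈ ({a,b} : Finset (Fin (2*k))) := h ▸ (by simp)
  simp only [Finset.mem_insert, Finset.mem_singleton] at ha hb hu
  rcases ha with rfl | rfl
  · rcases hb with rfl | rfl
    · exact absurd rfl (ne_of_lt hab)
    · exact ⟨rfl, rfl⟩
  · rcases hb with rfl | rfl
    · exact absurd (huv.trans hab) (lt_irrefl _)
    · exact absurd hab (lt_irrefl _)
  
lemma crossOrd_iff {k : ℕ} {u v s t : Fin (2*k)} (h1 : u < v) (h2 : s < t) :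
    CrossOrd ({u,v} : Finset (Fin (2*k))) {s,t} ↔ u < s ∧ s < v ∧ v < t := by
  constructor
  · rintro ⟨a, b, c, d, hab, hcd, hp, hq, h3, h4, h5⟩
    obtain ⟨rfl, rfl⟩ := pair_eq_pair hab h1 hp.symm
    obtain ⟨rfl, rfl⟩ := pair_eq_pair hcd h2 hq.symm
    exact ⟨h3, h4, h5⟩
  · rintro ⟨h3, h4, h5⟩
    exact ⟨u, v, s, t, h1, h2, rfl, rfl, h3, h4, h5⟩

lemma crossOrd_self {k : ℕ} (p : Finset (Fin (2*k))) : ¬ CrossOrd p p := by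
  rintro ⟨a, b, c, d, hab, hcd, hp, hq, h3, _, _⟩
  obtain ⟨rfl, rfl⟩ := pair_eq_pair hab hcd (hp.symm.trans hq)
  exact lt_irrefl _ h3

section Pairing
variable {k : ℕ} {M : Finset (Finset (Fin (2*k)))}

lemma pairing_disj (hM : IsPairing k M) {p q : Finset (Fin (2*k))} (hp : p ∈ M) (hq : q ∈ M)
    (hne : p ≠ q) {v : Fin (2*k)} (hvp : v ∈ p) : v ∉ q := by
  intro hvq
  obtain ⟨r, _, hr⟩ := hM.2 v
  exact hne ((hr p ⟨hp, hvp⟩).trans (hr q ⟨hq, hvq⟩).symm)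

lemma pair_repr (hM : IsPairing k M) {p : Finset (Fin (2*k))} (hp : p ∈ M) {v : Fin (2*k)}
    (hv : v ∈ p) : ∃ w, w ≠ v ∧ p = {v, w} := by
  have h2 := hM.1 p hp
  obtain ⟨a, b, hab, rfl⟩ := Finset.card_eq_two.mp h2
  simp only [Finset.mem_insert, Finset.mem_singleton] at hv
  rcases hv with rfl | rfl
  · exact ⟨b, hab.symm, rfl⟩
  · exact ⟨a, hab, by rw [Finset.pair_comm]⟩

/-- partner function -/
noncomputable def pfn (M : Finset (Finset (Fin (2*k)))) (v : Fin (2*k)) : Fin (2*k) :=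
  if h : ∃ w, w ≠ v ∧ ({v, w} : Finset (Fin (2*k))) ∈ M then h.choose else v

lemma pfn_spec (hM : IsPairing k M) (v : Fin (2*k)) :
    pfn M v ≠ v ∧ ({v, pfn M v} : Finset (Fin (2*k))) ∈ M := by
  obtain ⟨p, ⟨hp, hvp⟩, _⟩ := hM.2 v
  obtain ⟨w, hw, rfl⟩ := pair_repr hM hp hvp
  have h : ∃ w', w' ≠ v ∧ ({v, w'} : Finset (Fin (2*k))) ∈ M := ⟨w, hw, hp⟩
  rw [pfn, dif_pos h]
  exact ⟨h.choose_spec.1, h.choose_spec.2⟩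

lemma pfn_eq (hM : IsPairing k M) {v w : Fin (2*k)} (hw : w ≠ v)
    (hm : ({v, w} : Finset (Fin (2*k))) ∈ M) : pfn M v = w := by
  obtain ⟨hne, hmem⟩ := pfn_spec hM v
  obtain ⟨p, _, hu⟩ := hM.2 v
  have h1 := hu _ ⟨hmem, by simp⟩
  have h2 := hu _ ⟨hm, by simp⟩
  have h3 : ({v, pfn M v} : Finset (Fin (2*k))) = {v, w} := h1.trans h2.symm
  have hmm : pfn M v ∈ ({v, w} : Finset (Fin (2*k))) := h3 ▸ (by simp)
  simp only [Finset.mem_insert, Finset.mem_singleton] at hmm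
  rcases hmm with h | h
  · exact absurd h hne
  · exact h

lemma pfn_mem (hM : IsPairing k M) (v : Fin (2*k)) :
    ({v, pfn M v} : Finset (Fin (2*k))) ∈ M := (pfn_spec hM v).2

lemma pfn_ne (hM : IsPairing k M) (v : Fin (2*k)) : pfn M v ≠ v := (pfn_spec hM v).1

lemma pfn_invol (hM : IsPairing k M) (v : Fin (2*k)) : pfn M (pfn M v) = v := by
  apply pfn_eq hM (pfn_ne hM v).symm
  rw [Finset.pair_comm]; exact pfn_mem hM v

lemma mem_pairing_iff (hM : IsPairing k M) {p : Finset (Fin (2*k))} :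
    p ∈ M ↔ ∃ v, p = {v, pfn M v} := by
  constructor
  · intro hp
    have h2 := hM.1 p hp
    obtain ⟨a, b, hab, rfl⟩ := Finset.card_eq_two.mp h2
    exact ⟨a, by rw [pfn_eq hM hab.symm hp]⟩
  · rintro ⟨v, rfl⟩; exact pfn_mem hM v

end Pairing

section Canon
variable {k : ℕ}

def canonF (v : Fin (2*k)) : Fin (2*k) :=
  ⟨if v.val % 2 = 0 then v.val + 1 else v.val - 1, by
    rcases v with ⟨m, hm⟩; dsimp only; split <;> omega⟩

lemma canonF_ne (v : Fin (2*k)) : canonF v ≠ v := by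
  rcases v with ⟨m, hm⟩
  simp only [canonF, Ne, Fin.mk.injEq]
  split <;> omega

lemma canonF_invol (v : Fin (2*k)) : canonF (canonF v) = v := by
  rcases v with ⟨m, hm⟩
  simp only [canonF, Fin.mk.injEq]
  rcases Nat.even_or_odd m with h | h
  · have h0 : m % 2 = 0 := Nat.even_iff.mp h
    simp only [h0, if_true]
    have : (m+1) % 2 = 1 := by omega
    simp [this]
  · have h0 : m % 2 = 1 := Nat.odd_iff.mp h
    simp only [h0]
    have h1 : 0 < m := by omega
    have : (m-1) % 2 = 0 := by omega
    simp [this]; omega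

lemma canonF_val_even {v : Fin (2*k)} (h : v.val % 2 = 0) : (canonF v).val = v.val + 1 := by
  simp [canonF, h]

lemma canonF_val_odd {v : Fin (2*k)} (h : v.val % 2 = 1) : (canonF v).val = v.val - 1 := by
  simp [canonF, h]

noncomputable def canonM (k : ℕ) : Finset (Finset (Fin (2*k))) :=
  Finset.univ.image (fun v => ({v, canonF v} : Finset (Fin (2*k))))

lemma canonM_pairing : IsPairing k (canonM k) := by
  constructor
  · intro p hp
    simp only [canonM, Finset.mem_image] at hp
    obtain ⟨v, _, rfl⟩ := hp
    rw [Finset.card_insert_of_notMem (by simpa using (canonF_ne v).symm), Finset.card_singleton]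
  · intro v
    refine ⟨{v, canonF v}, ⟨Finset.mem_image_of_mem _ (Finset.mem_univ v), by simp⟩, ?_⟩
    rintro q ⟨hq, hvq⟩
    simp only [canonM, Finset.mem_image] at hq
    obtain ⟨w, _, rfl⟩ := hq
    simp only [Finset.mem_insert, Finset.mem_singleton] at hvq
    rcases hvq with rfl | rfl
    · rfl
    · rw [Finset.pair_comm, canonF_invol]

end Canon

section CanonCross
variable {k : ℕ}

lemma canon_pair_consec {p : Finset (Fin (2*k))} (hp : p ∈ canonM k) {a b : Fin (2*k)}
    (hab : a < b) (hpab : p = {a, b}) : b.val = a.val + 1 := by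
  simp only [canonM, Finset.mem_image] at hp
  obtain ⟨v, _, rfl⟩ := hp
  rcases Nat.even_or_odd v.val with h | h
  · have h0 := canonF_val_even (Nat.even_iff.mp h)
    have hv : v < canonF v := by rw [Fin.lt_def, h0]; omega
    obtain ⟨h1, h2⟩ := pair_eq_pair hv hab hpab
    subst h1
    rw [h2] at h0
    exact h0
  · have h0 := canonF_val_odd (Nat.odd_iff.mp h)
    have hvp : 0 < v.val := by have := Nat.odd_iff.mp h; omega
    have hv : canonF v < v := by rw [Fin.lt_def, h0]; omega
    rw [Finset.pair_comm] at hpab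
    obtain ⟨h1, h2⟩ := pair_eq_pair hv hab hpab
    subst h2
    rw [h1] at h0
    omega

lemma crossNum_canonM : crossNum (canonM k) = 0 := by
  rw [crossNum, Finset.card_eq_zero, Finset.eq_empty_iff_forall_notMem]
  rintro ⟨p, q⟩ hmem
  simp only [Finset.mem_filter, Finset.mem_product] at hmem
  obtain ⟨⟨hp, hq⟩, a, b, c, d, hab, hcd, hpab, hqcd, h3, h4, h5⟩ := hmem
  have := canon_pair_consec hp hab hpab
  rw [Fin.lt_def] at h3 h4
  omega

noncomputable def Dset (M : Finset (Finset (Fin (2*k)))) : Finset (Fin (2*k)) :=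
  Finset.univ.filter (fun v => ({v, canonF v} : Finset (Fin (2*k))) ∉ M)

lemma Dset_empty {M : Finset (Finset (Fin (2*k)))} (hM : IsPairing k M)
    (h : Dset M = ∅) : M = canonM k := by
  have hall : ∀ v : Fin (2*k), ({v, canonF v} : Finset (Fin (2*k))) ∈ M := by
    intro v
    by_contra hc
    have : v ∈ Dset M := by simp [Dset, hc]
    simp [h] at this
  ext p
  constructor
  · intro hp
    obtain ⟨v, rfl⟩ := (mem_pairing_iff hM).mp hp
    have h1 : pfn M v = canonF v := pfn_eq hM (canonF_ne v) (hall v)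
    rw [h1]
    exact Finset.mem_image_of_mem _ (Finset.mem_univ v)
  · intro hp
    simp only [canonM, Finset.mem_image] at hp
    obtain ⟨v, _, rfl⟩ := hp
    exact hall v

end CanonCross

section Swap
variable {k : ℕ}

/-- the swapped pairing -/
noncomputable def swapped (M : Finset (Finset (Fin (2*k)))) (x y a b : Fin (2*k)) :
    Finset (Finset (Fin (2*k))) :=
  insert {x,b} (insert {y,a} ((M.erase {x,a}).erase {y,b}))

noncomputable def sigma (x y a b : Fin (2*k)) (p : Finset (Fin (2*k))) : Finset (Fin (2*k)) :=
  if p = {x,a} then {y,a} else if p = {y,b} then {x,b} else p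

lemma ne_pair_of_not_mem {u v : Fin (2*k)} {p : Finset (Fin (2*k))} (h : u ∉ p) :
    p ≠ ({u,v} : Finset (Fin (2*k))) := by
  intro he
  exact h (he ▸ (by simp : u ∈ ({u,v} : Finset (Fin (2*k)))))

lemma sigma_P {x y a b : Fin (2*k)} : sigma x y a b ({x,a} : Finset (Fin (2*k))) = {y,a} :=
  if_pos rfl

lemma sigma_Q {x y a b : Fin (2*k)} (h : ({y,b} : Finset (Fin (2*k))) ≠ {x,a}) :
    sigma x y a b ({y,b} : Finset (Fin (2*k))) = {x,b} := by
  rw [sigma, if_neg h, if_pos rfl]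

lemma sigma_other {x y a b : Fin (2*k)} {p : Finset (Fin (2*k))} (h1 : p ≠ {x,a})
    (h2 : p ≠ {y,b}) : sigma x y a b p = p := by
  rw [sigma, if_neg h1, if_neg h2]

lemma mem_swapped {M : Finset (Finset (Fin (2*k)))} {x y a b : Fin (2*k)}
    {p : Finset (Fin (2*k))} :
    p ∈ swapped M x y a b ↔ p = {x,b} ∨ p = {y,a} ∨ (p ∈ M ∧ p ≠ {x,a} ∧ p ≠ {y,b}) := by
  simp only [swapped, Finset.mem_insert, Finset.mem_erase]
  tauto

variable {M : Finset (Finset (Fin (2*k)))} {x y a b : Fin (2*k)}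

-- distinctness consequences
lemma pair_ne_of_lt {u v s t : Fin (2*k)} (h : u ∉ ({s,t} : Finset (Fin (2*k)))) :
    ({u,v} : Finset (Fin (2*k))) ≠ {s,t} := by
  intro he
  exact h (he ▸ (by simp : u ∈ ({u,v} : Finset (Fin (2*k)))))

section Core
variable (hM : IsPairing k M) (hxy : x < y) (hya : y < a) (hyb : y < b) (hab : a ≠ b)
  (hP : ({x,a} : Finset (Fin (2*k))) ∈ M) (hQ : ({y,b} : Finset (Fin (2*k))) ∈ M)

include hxy hya hyb hab

lemma ne_xyab : x ≠ y ∧ x ≠ a ∧ x ≠ b ∧ y ≠ a ∧ y ≠ b := by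
  exact ⟨ne_of_lt hxy, ne_of_lt (hxy.trans hya), ne_of_lt (hxy.trans hyb),
    ne_of_lt hya, ne_of_lt hyb⟩

lemma PQ_ne : ({x,a} : Finset (Fin (2*k))) ≠ {y,b} ∧ ({x,a} : Finset (Fin (2*k))) ≠ {x,b} ∧
    ({x,a} : Finset (Fin (2*k))) ≠ {y,a} ∧ ({y,b} : Finset (Fin (2*k))) ≠ {x,b} ∧
    ({y,b} : Finset (Fin (2*k))) ≠ {y,a} ∧ ({x,b} : Finset (Fin (2*k))) ≠ {y,a} := by
  obtain ⟨h1, h2, h3, h4, h5⟩ := ne_xyab hxy hya hyb hab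
  refine ⟨?_, ?_, ?_, ?_, ?_, ?_⟩ <;> intro he
  · exact absurd (Finset.mem_insert.mp (he ▸ (by simp : x ∈ ({x,a} : Finset (Fin (2*k))))))
      (by simp only [Finset.mem_singleton]; push_neg; exact ⟨h1, h3⟩)
  · obtain ⟨_, h⟩ := pair_eq_pair (hxy.trans hya) (hxy.trans hyb) he
    exact hab h
  · obtain ⟨h, _⟩ := pair_eq_pair (hxy.trans hya) hya he
    exact h1 h
  · obtain ⟨h, _⟩ := pair_eq_pair hyb (hxy.trans hyb) he
    exact h1 h.symm
  · obtain ⟨_, h⟩ := pair_eq_pair hyb hya he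
    exact hab h.symm
  · obtain ⟨h, _⟩ := pair_eq_pair (hxy.trans hyb) hya he
    exact h1 h

include hM hP hQ

lemma other_avoid {p : Finset (Fin (2*k))} (hp : p ∈ M) (hp1 : p ≠ {x,a}) (hp2 : p ≠ {y,b}) :
    x ∉ p ∧ y ∉ p ∧ a ∉ p ∧ b ∉ p := by
  refine ⟨fun h => ?_, fun h => ?_, fun h => ?_, fun h => ?_⟩
  · exact pairing_disj hM hp hP hp1 h (by simp)
  · exact pairing_disj hM hp hQ hp2 h (by simp)
  · exact pairing_disj hM hp hP hp1 h (by simp)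
  · exact pairing_disj hM hp hQ hp2 h (by simp)

lemma sigma_mem {p : Finset (Fin (2*k))} (hp : p ∈ M) :
    sigma x y a b p ∈ swapped M x y a b := by
  rw [sigma, mem_swapped]
  split
  · exact Or.inr (Or.inl rfl)
  · split
    · exact Or.inl rfl
    · exact Or.inr (Or.inr ⟨hp, by assumption, by assumption⟩)

lemma sigma_inv {p : Finset (Fin (2*k))} (hp : p ∈ M) :
    sigma x y b a (sigma x y a b p) = p := by
  obtain ⟨hPQ, hPP', hPQ', hQP', hQQ', hP'Q'⟩ := PQ_ne hxy hya hyb hab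
  by_cases h1 : p = {x,a}
  · subst h1
    rw [sigma_P, sigma_Q hP'Q'.symm]
  · by_cases h2 : p = {y,b}
    · subst h2
      rw [sigma_Q hPQ.symm, sigma_P]
    · obtain ⟨hx, hy, ha, hb⟩ := other_avoid hM hxy hya hyb hab hP hQ hp h1 h2
      rw [sigma_other h1 h2, sigma_other (ne_pair_of_not_mem hx) (ne_pair_of_not_mem hy)]

lemma swapped_pairing : IsPairing k (swapped M x y a b) := by
  obtain ⟨h1, h2, h3, h4, h5⟩ := ne_xyab hxy hya hyb hab
  obtain ⟨hPQ, hPP', hPQ', hQP', hQQ', hP'Q'⟩ := PQ_ne hxy hya hyb hab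
  constructor
  · intro p hp
    rw [mem_swapped] at hp
    rcases hp with rfl | rfl | ⟨hp, _, _⟩
    · rw [Finset.card_insert_of_notMem (by simpa using h3), Finset.card_singleton]
    · rw [Finset.card_insert_of_notMem (by simpa using h4), Finset.card_singleton]
    · exact hM.1 p hp
  · intro v
    by_cases hvx : v = x
    · subst hvx
      refine ⟨{v,b}, ⟨mem_swapped.mpr (Or.inl rfl), by simp⟩, ?_⟩
      rintro q ⟨hq, hvq⟩
      rw [mem_swapped] at hq
      rcases hq with rfl | rfl | ⟨hq, hq1, hq2⟩
      · rfl
      · simp only [Finset.mem_insert, Finset.mem_singleton] at hvq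
        rcases hvq with rfl | rfl
        · exact absurd rfl h1
        · exact absurd rfl h2
      · exact absurd hvq ((other_avoid hM hxy hya hyb hab hP hQ hq hq1 hq2).1)
    · by_cases hvb : v = b
      · subst hvb
        refine ⟨{x,v}, ⟨mem_swapped.mpr (Or.inl rfl), by simp⟩, ?_⟩
        rintro q ⟨hq, hvq⟩
        rw [mem_swapped] at hq
        rcases hq with rfl | rfl | ⟨hq, hq1, hq2⟩
        · rfl
        · simp only [Finset.mem_insert, Finset.mem_singleton] at hvq
          rcases hvq with rfl | rfl
          · exact absurd rfl h5.symm
          · exact absurd rfl hab.symm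
        · exact absurd hvq ((other_avoid hM hxy hya hyb hab hP hQ hq hq1 hq2).2.2.2)
      · by_cases hvy : v = y
        · subst hvy
          refine ⟨{v,a}, ⟨mem_swapped.mpr (Or.inr (Or.inl rfl)), by simp⟩, ?_⟩
          rintro q ⟨hq, hvq⟩
          rw [mem_swapped] at hq
          rcases hq with rfl | rfl | ⟨hq, hq1, hq2⟩
          · simp only [Finset.mem_insert, Finset.mem_singleton] at hvq
            rcases hvq with rfl | rfl
            · exact absurd rfl h1.symm
            · exact absurd rfl h5
          · rfl
          · exact absurd hvq ((other_avoid hM hxy hya hyb hab hP hQ hq hq1 hq2).2.1)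
        · by_cases hva : v = a
          · subst hva
            refine ⟨{y,v}, ⟨mem_swapped.mpr (Or.inr (Or.inl rfl)), by simp⟩, ?_⟩
            rintro q ⟨hq, hvq⟩
            rw [mem_swapped] at hq
            rcases hq with rfl | rfl | ⟨hq, hq1, hq2⟩
            · simp only [Finset.mem_insert, Finset.mem_singleton] at hvq
              rcases hvq with rfl | rfl
              · exact absurd rfl h2.symm
              · exact absurd rfl hab
            · rfl
            · exact absurd hvq ((other_avoid hM hxy hya hyb hab hP hQ hq hq1 hq2).2.2.1)
          · -- v not among x,y,a,b : its M-pair survives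
            obtain ⟨p₀, ⟨hp₀M, hvp₀⟩, hu⟩ := hM.2 v
            have hp₀1 : p₀ ≠ {x,a} := by
              rintro rfl
              simp only [Finset.mem_insert, Finset.mem_singleton] at hvp₀
              tauto
            have hp₀2 : p₀ ≠ {y,b} := by
              rintro rfl
              simp only [Finset.mem_insert, Finset.mem_singleton] at hvp₀
              tauto
            refine ⟨p₀, ⟨mem_swapped.mpr (Or.inr (Or.inr ⟨hp₀M, hp₀1, hp₀2⟩)), hvp₀⟩, ?_⟩
            rintro q ⟨hq, hvq⟩
            rw [mem_swapped] at hq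
            rcases hq with rfl | rfl | ⟨hq, hq1, hq2⟩
            · simp only [Finset.mem_insert, Finset.mem_singleton] at hvq
              tauto
            · simp only [Finset.mem_insert, Finset.mem_singleton] at hvq
              tauto
            · exact hu q ⟨hq, hvq⟩

end Core

lemma repr_lt (hM : IsPairing k M) {r : Finset (Fin (2*k))} (hr : r ∈ M) :
    ∃ c d, c < d ∧ r = {c,d} := by
  obtain ⟨c, d, hcd, rfl⟩ := Finset.card_eq_two.mp (hM.1 r hr)
  rcases lt_or_gt_of_ne hcd with h | h
  · exact ⟨c, d, h, rfl⟩
  · exact ⟨d, c, h, Finset.pair_comm c d⟩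

lemma cross_transfer (hM : IsPairing k M) (hxy : x < y) (hya : y < a) (hyb : y < b)
    (hab : a ≠ b)
    (hP : ({x,a} : Finset (Fin (2*k))) ∈ M) (hQ : ({y,b} : Finset (Fin (2*k))) ∈ M)
    (side : ∀ r ∈ M, r ≠ ({x,a} : Finset (Fin (2*k))) → r ≠ ({y,b} : Finset (Fin (2*k))) →
      (∀ v ∈ r, v < x) ∨ (∀ v ∈ r, y < v))
    {p q : Finset (Fin (2*k))} (hp : p ∈ M) (hq : q ∈ M)
    (hcr : CrossOrd p q) (hne : ¬(p = {x,a} ∧ q = {y,b})) :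
    CrossOrd (sigma x y a b p) (sigma x y a b q) := by
  obtain ⟨hPQ, hPP', hPQ', hQP', hQQ', hP'Q'⟩ := PQ_ne hxy hya hyb hab
  have hxa : x < a := hxy.trans hya
  have hxb : x < b := hxy.trans hyb
  by_cases hpP : p = {x,a}
  · subst hpP
    by_cases hqP : q = {x,a}
    · rw [hqP] at hcr
      exact absurd hcr (crossOrd_self _)
    by_cases hqQ : q = {y,b}
    · exact absurd ⟨rfl, hqQ⟩ hne
    · -- p = P, q other
      obtain ⟨c, d, hcd, rfl⟩ := repr_lt hM hq
      rw [crossOrd_iff hxa hcd] at hcr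
      obtain ⟨h1, h2, h3⟩ := hcr
      have hyc : y < c := by
        rcases side _ hq hqP hqQ with hs | hs
        · exact absurd (hs c (by simp)) (not_lt_of_gt h1)
        · exact hs c (by simp)
      rw [sigma_P, sigma_other hqP hqQ, crossOrd_iff hya hcd]
      exact ⟨hyc, h2, h3⟩
  · by_cases hpQ : p = {y,b}
    · subst hpQ
      by_cases hqP : q = {x,a}
      · rw [hqP, crossOrd_iff hyb hxa] at hcr
        exact absurd (hxy.trans hcr.1) (lt_irrefl _)
      by_cases hqQ : q = {y,b}
      · rw [hqQ] at hcr
        exact absurd hcr (crossOrd_self _)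
      · -- p = Q, q other
        obtain ⟨c, d, hcd, rfl⟩ := repr_lt hM hq
        rw [crossOrd_iff hyb hcd] at hcr
        obtain ⟨h1, h2, h3⟩ := hcr
        rw [sigma_Q hPQ.symm, sigma_other hqP hqQ, crossOrd_iff hxb hcd]
        exact ⟨hxy.trans h1, h2, h3⟩
    · -- p other
      obtain ⟨c, d, hcd, rfl⟩ := repr_lt hM hp
      by_cases hqP : q = {x,a}
      · rw [hqP, crossOrd_iff hcd hxa] at hcr
        obtain ⟨h1, h2, h3⟩ := hcr
        rcases side _ hp hpP hpQ with hs | hs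
        · exact absurd (hs d (by simp)) (not_lt_of_gt h2)
        · exact absurd (hs c (by simp)) (not_lt_of_gt ((h1.trans hxy)))
      by_cases hqQ : q = {y,b}
      · rw [hqQ, crossOrd_iff hcd hyb] at hcr
        obtain ⟨h1, h2, h3⟩ := hcr
        rcases side _ hp hpP hpQ with hs | hs
        · exact absurd (hs d (by simp)) (not_lt_of_gt (hxy.trans h2))
        · exact absurd (hs c (by simp)) (not_lt_of_gt h1)
      · rw [sigma_other hpP hpQ, sigma_other hqP hqQ]
        exact hcr

lemma side_swapped
    (side : ∀ r ∈ M, r ≠ ({x,a} : Finset (Fin (2*k))) → r ≠ ({y,b} : Finset (Fin (2*k))) →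
      (∀ v ∈ r, v < x) ∨ (∀ v ∈ r, y < v)) :
    ∀ r ∈ swapped M x y a b, r ≠ ({x,b} : Finset (Fin (2*k))) →
      r ≠ ({y,a} : Finset (Fin (2*k))) → (∀ v ∈ r, v < x) ∨ (∀ v ∈ r, y < v) := by
  intro r hr h1 h2
  rw [mem_swapped] at hr
  rcases hr with rfl | rfl | ⟨hr, hr1, hr2⟩
  · exact absurd rfl h1
  · exact absurd rfl h2
  · exact side r hr hr1 hr2

lemma swapped_swapped (hM : IsPairing k M) (hxy : x < y) (hya : y < a) (hyb : y < b)
    (hab : a ≠ b)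
    (hP : ({x,a} : Finset (Fin (2*k))) ∈ M) (hQ : ({y,b} : Finset (Fin (2*k))) ∈ M) :
    swapped (swapped M x y a b) x y b a = M := by
  obtain ⟨hPQ, hPP', hPQ', hQP', hQQ', hP'Q'⟩ := PQ_ne hxy hya hyb hab
  ext p
  rw [mem_swapped, mem_swapped]
  constructor
  · rintro (rfl | rfl | ⟨(rfl | rfl | ⟨hp, hp1, hp2⟩), h1, h2⟩)
    · exact hP
    · exact hQ
    · exact absurd rfl h1
    · exact absurd rfl h2
    · exact hp
  · intro hp
    by_cases h1 : p = {x,a}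
    · exact Or.inl h1
    by_cases h2 : p = {y,b}
    · exact Or.inr (Or.inl h2)
    · have hav := other_avoid hM hxy hya hyb hab hP hQ hp h1 h2
      exact Or.inr (Or.inr ⟨Or.inr (Or.inr ⟨hp, h1, h2⟩),
        ne_pair_of_not_mem hav.1, ne_pair_of_not_mem hav.2.1⟩)

lemma crossNum_swapped (hM : IsPairing k M) (hxy : x < y) (hya : y < a) (hyb : y < b)
    (hlt : a < b)
    (hP : ({x,a} : Finset (Fin (2*k))) ∈ M) (hQ : ({y,b} : Finset (Fin (2*k))) ∈ M)
    (side : ∀ r ∈ M, r ≠ ({x,a} : Finset (Fin (2*k))) → r ≠ ({y,b} : Finset (Fin (2*k))) →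
      (∀ v ∈ r, v < x) ∨ (∀ v ∈ r, y < v)) :
    crossNum M = crossNum (swapped M x y a b) + 1 := by
  have hab : a ≠ b := ne_of_lt hlt
  obtain ⟨hPQ, hPP', hPQ', hQP', hQQ', hP'Q'⟩ := PQ_ne hxy hya hyb hab
  have hM' : IsPairing k (swapped M x y a b) :=
    swapped_pairing hM hxy hya hyb hab hP hQ
  have hP' : ({x,b} : Finset (Fin (2*k))) ∈ swapped M x y a b :=
    mem_swapped.mpr (Or.inl rfl)
  have hQ' : ({y,a} : Finset (Fin (2*k))) ∈ swapped M x y a b :=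
    mem_swapped.mpr (Or.inr (Or.inl rfl))
  have hPnot : ({x,a} : Finset (Fin (2*k))) ∉ swapped M x y a b := by
    rw [mem_swapped]
    rintro (h | h | ⟨_, h, _⟩) <;> [exact hPP' h; exact hPQ' h; exact h rfl]
  have hQnot : ({y,b} : Finset (Fin (2*k))) ∉ swapped M x y a b := by
    rw [mem_swapped]
    rintro (h | h | ⟨_, _, h⟩) <;> [exact hQP' h; exact hQQ' h; exact h rfl]
  have side' := side_swapped (M := M) (x := x) (y := y) (a := a) (b := b) side
  have hss := swapped_swapped hM hxy hya hyb hab hP hQ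
  have hPQmem : (({x,a}, {y,b}) : Finset (Fin (2*k)) × Finset (Fin (2*k))) ∈
      (M ×ˢ M).filter (fun pq => CrossOrd pq.1 pq.2) := by
    rw [Finset.mem_filter, Finset.mem_product]
    exact ⟨⟨hP, hQ⟩, (crossOrd_iff (hxy.trans hya) hyb).mpr ⟨hxy, hya, hlt⟩⟩
  rw [crossNum, crossNum, ← Finset.card_erase_add_one hPQmem]
  congr 1
  apply Finset.card_nbij' (fun pq => (sigma x y a b pq.1, sigma x y a b pq.2))
    (fun pq => (sigma x y b a pq.1, sigma x y b a pq.2))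
  · rintro ⟨p, q⟩ hmem
    rw [Finset.mem_coe, Finset.mem_erase, Finset.mem_filter, Finset.mem_product] at hmem
    obtain ⟨hne, ⟨hp, hq⟩, hcr⟩ := hmem
    have hne' : ¬(p = {x,a} ∧ q = {y,b}) := by
      rintro ⟨rfl, rfl⟩; exact hne rfl
    rw [Finset.mem_coe, Finset.mem_filter, Finset.mem_product]
    exact ⟨⟨sigma_mem hM hxy hya hyb hab hP hQ hp, sigma_mem hM hxy hya hyb hab hP hQ hq⟩,
      cross_transfer hM hxy hya hyb hab hP hQ side hp hq hcr hne'⟩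
  · rintro ⟨p, q⟩ hmem
    rw [Finset.mem_coe, Finset.mem_filter, Finset.mem_product] at hmem
    obtain ⟨⟨hp, hq⟩, hcr⟩ := hmem
    have hne' : ¬(p = {x,b} ∧ q = {y,a}) := by
      rintro ⟨rfl, rfl⟩
      rw [crossOrd_iff (hxy.trans hyb) hya] at hcr
      exact absurd hlt (not_lt_of_gt hcr.2.2)
    have hcr' := cross_transfer hM' hxy hyb hya hab.symm hP' hQ' side' hp hq hcr hne'
    rw [Finset.mem_coe, Finset.mem_erase, Finset.mem_filter, Finset.mem_product]
    refine ⟨?_, ⟨?_, ?_⟩, hcr'⟩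
    · -- image is not (P, Q)
      intro he
      have he1 : sigma x y b a p = {x,a} := congrArg Prod.fst he
      have he2 : sigma x y b a q = {y,b} := congrArg Prod.snd he
      have hpv : p = {y,a} := by
        by_cases e1 : p = {x,b}
        · rw [e1, sigma_P] at he1
          exact absurd he1 (by
            intro h
            exact (ne_xyab hxy hya hyb hab).1 (pair_eq_pair hyb (hxy.trans hya) h).1.symm)
        by_cases e2 : p = {y,a}
        · exact e2
        · rw [sigma_other e1 e2] at he1
          rw [he1] at hp
          exact absurd hp hPnot
      have hqv : q = {x,b} := by
        by_cases e1 : q = {x,b}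
        · exact e1
        by_cases e2 : q = {y,a}
        · rw [e2, sigma_Q hP'Q'.symm] at he2
          exact absurd he2 (by
            intro h
            exact hab (pair_eq_pair (hxy.trans hya) hyb h).2)
        · rw [sigma_other e1 e2] at he2
          rw [he2] at hq
          exact absurd hq hQnot
      rw [hpv, hqv, crossOrd_iff hya (hxy.trans hyb)] at hcr
      exact absurd (hxy.trans hcr.1) (lt_irrefl _)
    · have := sigma_mem hM' hxy hyb hya hab.symm hP' hQ' hp
      rwa [hss] at this
    · have := sigma_mem hM' hxy hyb hya hab.symm hP' hQ' hq
      rwa [hss] at this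
  · rintro ⟨p, q⟩ hmem
    rw [Finset.mem_coe, Finset.mem_erase, Finset.mem_filter, Finset.mem_product] at hmem
    obtain ⟨_, ⟨hp, hq⟩, _⟩ := hmem
    have e1 := sigma_inv hM hxy hya hyb hab hP hQ hp
    have e2 := sigma_inv hM hxy hya hyb hab hP hQ hq
    simp only [e1, e2]
  · rintro ⟨p, q⟩ hmem
    rw [Finset.mem_coe, Finset.mem_filter, Finset.mem_product] at hmem
    obtain ⟨⟨hp, hq⟩, _⟩ := hmem
    have e1 := sigma_inv hM' hxy hyb hya hab.symm hP' hQ' hp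
    have e2 := sigma_inv hM' hxy hyb hya hab.symm hP' hQ' hq
    simp only [e1, e2]

end Swap

section Defect
variable {k : ℕ} {M : Finset (Finset (Fin (2*k)))}

lemma defect_struct (hM : IsPairing k M) (hD : (Dset M).Nonempty)
    {x y a b : Fin (2*k)} (hx : x = (Dset M).min' hD) (hy : y = canonF x)
    (ha : a = pfn M x) (hb : b = pfn M y) :
    x < y ∧ y < a ∧ y < b ∧ a ≠ b ∧
    ({x,a} : Finset (Fin (2*k))) ∈ M ∧ ({y,b} : Finset (Fin (2*k))) ∈ M ∧
    (∀ r ∈ M, r ≠ ({x,a} : Finset (Fin (2*k))) → r ≠ ({y,b} : Finset (Fin (2*k))) →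
      (∀ v ∈ r, v < x) ∨ (∀ v ∈ r, y < v)) ∧
    (∀ v : Fin (2*k), v < x → ({v, canonF v} : Finset (Fin (2*k))) ∈ M ∧ canonF v < x) := by
  have hxD : x ∈ Dset M := hx ▸ Finset.min'_mem _ hD
  have hxny : ({x, canonF x} : Finset (Fin (2*k))) ∉ M := by
    simpa [Dset] using hxD
  rw [← hy] at hxny
  have hmin0 : ∀ v : Fin (2*k), v < x → ({v, canonF v} : Finset (Fin (2*k))) ∈ M := by
    intro v hv
    by_contra hc
    have hvD : v ∈ Dset M := by simp [Dset, hc]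
    have := Finset.min'_le _ _ hvD
    rw [← hx] at this
    exact absurd hv (not_lt.mpr this)
  have hpar : x.val % 2 = 0 := by
    by_contra h
    have hodd : x.val % 2 = 1 := by omega
    have hx0 : 0 < x.val := by omega
    have hwval : (canonF x).val = x.val - 1 := canonF_val_odd hodd
    have hwx : canonF x < x := by rw [Fin.lt_def]; omega
    have hmem := hmin0 _ hwx
    rw [canonF_invol] at hmem
    rw [hy] at hxny
    exact hxny (by rwa [Finset.pair_comm] at hmem)
  have hyval : y.val = x.val + 1 := hy ▸ canonF_val_even hpar
  have hxy : x < y := by rw [Fin.lt_def]; omega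
  have hmin : ∀ v : Fin (2*k), v < x →
      ({v, canonF v} : Finset (Fin (2*k))) ∈ M ∧ canonF v < x := by
    intro v hv
    refine ⟨hmin0 v hv, ?_⟩
    rw [Fin.lt_def] at hv ⊢
    rcases Nat.even_or_odd v.val with he | he
    · have h1 := canonF_val_even (Nat.even_iff.mp he)
      have := Nat.even_iff.mp he
      omega
    · have h1 := canonF_val_odd (Nat.odd_iff.mp he)
      omega
  have hPa : ({x,a} : Finset (Fin (2*k))) ∈ M := ha ▸ pfn_mem hM x
  have hax : a ≠ x := ha ▸ pfn_ne hM x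
  have hay : a ≠ y := by
    rintro rfl
    exact hxny hPa
  have hxa : x < a := by
    rcases lt_trichotomy x a with h | h | h
    · exact h
    · exact absurd h.symm hax
    · exfalso
      have h1 : pfn M a = canonF a := pfn_eq hM (canonF_ne a) (hmin a h).1
      have h2 : pfn M a = x := pfn_eq hM hax.symm (by rwa [Finset.pair_comm] at hPa)
      have h3 : canonF a = x := h1 ▸ h2
      have h4 : a = canonF x := by rw [← h3, canonF_invol]
      rw [← hy] at h4
      exact absurd (h4 ▸ h) (lt_asymm hxy)
  have hya : y < a := by
    rw [Fin.lt_def] at hxa ⊢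
    have : a.val ≠ y.val := fun h => hay (Fin.ext h)
    omega
  have hQb : ({y,b} : Finset (Fin (2*k))) ∈ M := hb ▸ pfn_mem hM y
  have hby : b ≠ y := hb ▸ pfn_ne hM y
  have hbx : b ≠ x := by
    rintro rfl
    exact hxny (by rwa [Finset.pair_comm] at hQb)
  have hxb : x < b := by
    rcases lt_trichotomy x b with h | h | h
    · exact h
    · exact absurd h.symm hbx
    · exfalso
      have h1 : pfn M b = canonF b := pfn_eq hM (canonF_ne b) (hmin b h).1
      have h2 : pfn M b = y := pfn_eq hM hby.symm (by rwa [Finset.pair_comm] at hQb)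
      have h3 : canonF b = y := h1 ▸ h2
      have h4 : b = canonF y := by rw [← h3, canonF_invol]
      rw [hy, canonF_invol] at h4
      exact absurd h4 hbx
  have hyb : y < b := by
    rw [Fin.lt_def] at hxb ⊢
    have : b.val ≠ y.val := fun h => hby (Fin.ext h)
    omega
  have hab : a ≠ b := by
    intro h
    have h1 : pfn M a = x := pfn_eq hM hax.symm (by rwa [Finset.pair_comm] at hPa)
    have h2 : pfn M b = y := pfn_eq hM hby.symm (by rwa [Finset.pair_comm] at hQb)
    rw [h] at h1
    rw [h1] at h2
    exact (ne_of_lt hxy) h2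
  refine ⟨hxy, hya, hyb, hab, hPa, hQb, ?_, hmin⟩
  intro r hr hr1 hr2
  by_cases hex : ∃ u ∈ r, u < x
  · obtain ⟨u, hur, hux⟩ := hex
    left
    obtain ⟨hcv, hcvx⟩ := hmin u hux
    obtain ⟨p₀, -, hu0⟩ := hM.2 u
    have e1 := hu0 r ⟨hr, hur⟩
    have e2 := hu0 _ ⟨hcv, by simp⟩
    have hre : r = {u, canonF u} := e1.trans e2.symm
    intro v hv
    rw [hre, Finset.mem_insert, Finset.mem_singleton] at hv
    rcases hv with rfl | rfl
    · exact hux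
    · exact hcvx
  · right
    intro v hv
    have hxlev : ¬ v < x := fun h => hex ⟨v, hv, h⟩
    have hvx : v ≠ x := by
      rintro rfl
      exact pairing_disj hM hr hPa hr1 hv (by simp)
    have hvy : v ≠ y := by
      rintro rfl
      exact pairing_disj hM hr hQb hr2 hv (by simp)
    rw [Fin.lt_def] at hxlev ⊢
    have h1 : v.val ≠ x.val := fun h => hvx (Fin.ext h)
    have h2 : v.val ≠ y.val := fun h => hvy (Fin.ext h)
    omega

end Defect

section Master
variable {k : ℕ}

noncomputable def swapM (M : Finset (Finset (Fin (2*k)))) : Finset (Finset (Fin (2*k))) :=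
  if hD : (Dset M).Nonempty then
    swapped M ((Dset M).min' hD) (canonF ((Dset M).min' hD)) (pfn M ((Dset M).min' hD))
      (pfn M (canonF ((Dset M).min' hD)))
  else M

lemma dset_canonM_empty : Dset (canonM k) = ∅ := by
  rw [Finset.eq_empty_iff_forall_notMem]
  intro v hv
  simp only [Dset, Finset.mem_filter] at hv
  exact hv.2 (Finset.mem_image_of_mem _ (Finset.mem_univ v))

lemma master {M : Finset (Finset (Fin (2*k)))} (hM : IsPairing k M) (hne : M ≠ canonM k) :
    IsPairing k (swapM M) ∧ swapM M ≠ canonM k ∧ swapM (swapM M) = M ∧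
    (crossNum M = crossNum (swapM M) + 1 ∨ crossNum (swapM M) = crossNum M + 1) := by
  have hD : (Dset M).Nonempty := by
    rcases Finset.eq_empty_or_nonempty (Dset M) with h | h
    · exact absurd (Dset_empty hM h) hne
    · exact h
  set x := (Dset M).min' hD with hx
  set y := canonF x with hy
  set a := pfn M x with ha
  set b := pfn M y with hb
  obtain ⟨hxy, hya, hyb, hab, hPa, hQb, side, hmin⟩ := defect_struct hM hD hx hy ha hb
  have hsw : swapM M = swapped M x y a b := dif_pos hD
  have hM' : IsPairing k (swapped M x y a b) := swapped_pairing hM hxy hya hyb hab hPa hQb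
  obtain ⟨hPQ, hPP', hPQ', hQP', hQQ', hP'Q'⟩ := PQ_ne hxy hya hyb hab
  obtain ⟨h1, h2, h3, h4, h5⟩ := ne_xyab hxy hya hyb hab
  have hxny : ({x, y} : Finset (Fin (2*k))) ∉ M := by
    have hxD : x ∈ Dset M := Finset.min'_mem _ hD
    simpa [Dset, ← hy] using hxD
  -- x is in the defect set of the swapped pairing
  have hxD' : x ∈ Dset (swapped M x y a b) := by
    simp only [Dset, Finset.mem_filter, Finset.mem_univ, true_and, ← hy]
    rw [mem_swapped]
    rintro (h | h | ⟨hm, -, -⟩)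
    · exact h5 (pair_eq_pair hxy (hxy.trans hyb) h).2
    · exact h1 (pair_eq_pair hxy hya h).1
    · exact hxny hm
  have hD' : (Dset (swapped M x y a b)).Nonempty := ⟨x, hxD'⟩
  have hminD' : ∀ v ∈ Dset (swapped M x y a b), ¬ v < x := by
    intro v hv hvx
    obtain ⟨hmem, hcvx⟩ := hmin v hvx
    have hvnotx : x ∉ ({v, canonF v} : Finset (Fin (2*k))) := by
      simp only [Finset.mem_insert, Finset.mem_singleton]
      rintro (rfl | h)
      · exact absurd hvx (lt_irrefl _)
      · exact absurd (h ▸ hcvx) (lt_irrefl _)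
    have hvnoty : y ∉ ({v, canonF v} : Finset (Fin (2*k))) := by
      simp only [Finset.mem_insert, Finset.mem_singleton]
      rintro (rfl | h)
      · exact absurd (hvx.trans hxy) (lt_irrefl _)
      · rw [← h] at hcvx
        exact absurd (hcvx.trans hxy) (lt_irrefl _)
    have : ({v, canonF v} : Finset (Fin (2*k))) ∈ swapped M x y a b := by
      rw [mem_swapped]
      refine Or.inr (Or.inr ⟨hmem, ?_, ?_⟩)
      · intro he
        exact hvnotx (he ▸ (by simp : x ∈ ({x,a} : Finset (Fin (2*k)))))
      · intro he
        exact hvnoty (he ▸ (by simp : y ∈ ({y,b} : Finset (Fin (2*k)))))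
    simp only [Dset, Finset.mem_filter] at hv
    exact hv.2 this
  have hmin' : (Dset (swapped M x y a b)).min' hD' = x := by
    apply le_antisymm (Finset.min'_le _ _ hxD')
    rcases lt_or_ge ((Dset (swapped M x y a b)).min' hD') x with h | h
    · exact absurd h (hminD' _ (Finset.min'_mem _ hD'))
    · exact h
  have hpfnx : pfn (swapped M x y a b) x = b :=
    pfn_eq hM' h3.symm (mem_swapped.mpr (Or.inl rfl))
  have hpfny : pfn (swapped M x y a b) y = a :=
    pfn_eq hM' h4.symm (mem_swapped.mpr (Or.inr (Or.inl rfl)))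
  have hswsw : swapM (swapM M) = M := by
    rw [hsw, swapM, dif_pos hD', hmin', hpfnx, ← hy, hpfny]
    exact swapped_swapped hM hxy hya hyb hab hPa hQb
  refine ⟨hsw ▸ hM', ?_, hswsw, ?_⟩
  · rw [hsw]
    intro he
    rw [he, dset_canonM_empty] at hxD'
    simp at hxD'
  · rw [hsw]
    rcases lt_or_gt_of_ne hab with h | h
    · exact Or.inl (crossNum_swapped hM hxy hya hyb h hPa hQb side)
    · right
      have side' := side_swapped (M := M) (x := x) (y := y) (a := a) (b := b) side
      have hP' : ({x,b} : Finset (Fin (2*k))) ∈ swapped M x y a b :=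
        mem_swapped.mpr (Or.inl rfl)
      have hQ' : ({y,a} : Finset (Fin (2*k))) ∈ swapped M x y a b :=
        mem_swapped.mpr (Or.inr (Or.inl rfl))
      have := crossNum_swapped hM' hxy hyb hya h hP' hQ' side'
      rwa [swapped_swapped hM hxy hya hyb hab hPa hQb] at this

end Master

theorem even_pairings_exceed_odd_by_one (k : ℕ) (hk : 1 ≤ k) :
    ((Finset.univ : Finset (Finset (Finset (Fin (2*k))))).filter
        (fun M => IsPairing k M ∧ Even (crossNum M))).card
      = ((Finset.univ : Finset (Finset (Finset (Fin (2*k))))).filter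
        (fun M => IsPairing k M ∧ Odd (crossNum M))).card + 1 := by
  set T := ((Finset.univ : Finset (Finset (Finset (Fin (2*k))))).filter
    (fun M => IsPairing k M ∧ Even (crossNum M))) with hT
  set U := ((Finset.univ : Finset (Finset (Finset (Fin (2*k))))).filter
    (fun M => IsPairing k M ∧ Odd (crossNum M))) with hU
  have hcanonT : canonM k ∈ T := by
    rw [hT, Finset.mem_filter]
    exact ⟨Finset.mem_univ _, canonM_pairing, by rw [crossNum_canonM]; exact Even.zero⟩
  rw [← Finset.card_erase_add_one hcanonT]
  congr 1
  apply Finset.card_nbij' swapM swapM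
  · intro M hMmem
    rw [Finset.mem_coe, Finset.mem_erase, hT, Finset.mem_filter] at hMmem
    obtain ⟨hneq, -, hMp, heven⟩ := hMmem
    obtain ⟨hp', -, -, hpar⟩ := master hMp hneq
    rw [Finset.mem_coe, hU, Finset.mem_filter]
    refine ⟨Finset.mem_univ _, hp', ?_⟩
    rcases hpar with h | h
    · rw [h, Nat.even_add_one] at heven
      rwa [← Nat.not_even_iff_odd]
    · rw [h]
      exact Even.add_one heven
  · intro M hMmem
    rw [Finset.mem_coe, hU, Finset.mem_filter] at hMmem
    obtain ⟨-, hMp, hodd⟩ := hMmem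
    have hneq : M ≠ canonM k := by
      rintro rfl
      rw [crossNum_canonM] at hodd
      simp [Nat.odd_iff] at hodd
    obtain ⟨hp', hne', -, hpar⟩ := master hMp hneq
    rw [Finset.mem_coe, Finset.mem_erase, hT, Finset.mem_filter]
    refine ⟨hne', Finset.mem_univ _, hp', ?_⟩
    rcases hpar with h | h
    · rw [h, Nat.odd_add_one] at hodd
      rwa [Nat.not_odd_iff_even] at hodd
    · rw [h, Nat.even_add_one]
      rwa [Nat.not_even_iff_odd]
  · intro M hMmem
    rw [Finset.mem_coe, Finset.mem_erase, hT, Finset.mem_filter] at hMmem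
    obtain ⟨hneq, -, hMp, -⟩ := hMmem
    exact (master hMp hneq).2.2.1
  · intro M hMmem
    rw [Finset.mem_coe, hU, Finset.mem_filter] at hMmem
    obtain ⟨-, hMp, hodd⟩ := hMmem
    have hneq : M ≠ canonM k := by
      rintro rfl
      rw [crossNum_canonM] at hodd
      simp [Nat.odd_iff] at hodd
    exact (master hMp hneq).2.2.1
end

section
/- Let N+_k and N-_k denote the number of pairings of {1,...,2k} with an even, respectively odd, number of crossings. Then the recursions N+_k = k·N+_{k-1} + (k-1)·N-_{k-1} and N-_k = k·N-_{k-1} + (k-1)·N+_{k-1} hold for all k ≥ 2. -/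
open scoped Classical

/-- Number of pairings of `{1,…,2k}` with an even number of crossings. -/
noncomputable def Nplus (k : ℕ) : ℕ :=
  ((Finset.univ : Finset (Finset (Finset (Fin (2*k))))).filter
    (fun M => IsPairing k M ∧ Even (crossNum M))).card

/-- Number of pairings of `{1,…,2k}` with an odd number of crossings. -/
noncomputable def Nminus (k : ℕ) : ℕ :=
  ((Finset.univ : Finset (Finset (Finset (Fin (2*k))))).filter
    (fun M => IsPairing k M ∧ Odd (crossNum M))).card

namespace PairRec

open Finset

variable {n : ℕ}

/-- generic pair equality under order -/
lemma pair_eq {α : Type*} [LinearOrder α] [DecidableEq α] {a b c d : α} (hab : a < b) (hcd : c < d)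
    (h : ({a, b} : Finset α) = {c, d}) : a = c ∧ b = d := by
  have ha : a = c ∨ a = d := by
    have : a ∈ ({c, d} : Finset α) := h ▸ (by simp)
    simpa using this
  have hb : b = c ∨ b = d := by
    have : b ∈ ({a, b} : Finset α) := by simp
    rw [h] at this
    simpa using this
  rcases ha with rfl|rfl
  · rcases hb with rfl|rfl
    · exact absurd hab (lt_irrefl _)
    · exact ⟨rfl, rfl⟩
  · rcases hb with rfl|rfl
    · exact absurd (hab.trans hcd) (lt_irrefl _)
    · exact absurd hab (lt_irrefl _)

lemma crossOrd_pair_iff {k : ℕ} {x y x' y' : Fin (2*k)} (h1 : x < y) (h2 : x' < y') :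
    CrossOrd ({x, y} : Finset (Fin (2*k))) {x', y'} ↔ (x < x' ∧ x' < y ∧ y < y') := by
  constructor
  · rintro ⟨a, b, c, d, hab, hcd, hp, hq, h3, h4, h5⟩
    obtain ⟨rfl, rfl⟩ := pair_eq h1 hab hp
    obtain ⟨rfl, rfl⟩ := pair_eq h2 hcd hq
    exact ⟨h3, h4, h5⟩
  · rintro ⟨h3, h4, h5⟩
    exact ⟨x, y, x', y', h1, h2, rfl, rfl, h3, h4, h5⟩

lemma exists_pair_lt {α : Type*} [LinearOrder α] [DecidableEq α] {s : Finset α} (h : s.card = 2) :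
    ∃ x y, x < y ∧ s = {x, y} := by
  obtain ⟨x, y, hxy, rfl⟩ := Finset.card_eq_two.mp h
  rcases lt_or_gt_of_ne hxy with h'|h'
  · exact ⟨x, y, h', rfl⟩
  · exact ⟨y, x, h', Finset.pair_comm x y⟩

/-! ### the insertion map -/

def top (n : ℕ) : Fin (2*(n+1)) := ⟨2*n+1, by omega⟩

def lft (a : Fin (2*n+1)) : Fin (2*(n+1)) := ⟨a.val, by omega⟩

noncomputable def emb (a : Fin (2*n+1)) (x : Fin (2*n)) : Fin (2*(n+1)) :=
  if x.val < a.val then ⟨x.val, by omega⟩ else ⟨x.val+1, by omega⟩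

lemma emb_val (a : Fin (2*n+1)) (x : Fin (2*n)) :
    (emb a x).val = if x.val < a.val then x.val else x.val + 1 := by
  unfold emb; split <;> rfl

lemma emb_strictMono (a : Fin (2*n+1)) : StrictMono (emb a) := by
  intro x y h
  have hv : x.val < y.val := h
  have := emb_val a x; have := emb_val a y
  rw [Fin.lt_def, emb_val, emb_val]
  split <;> split <;> omega

lemma emb_inj (a : Fin (2*n+1)) : Function.Injective (emb a) :=
  (emb_strictMono a).injective

lemma emb_lt_iff (a : Fin (2*n+1)) {x y : Fin (2*n)} : emb a x < emb a y ↔ x < y :=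
  (emb_strictMono a).lt_iff_lt

lemma emb_ne_top (a : Fin (2*n+1)) (x : Fin (2*n)) : emb a x ≠ top n := by
  have := emb_val a x
  intro h
  have : (emb a x).val = 2*n+1 := by rw [h]; rfl
  have hx := x.isLt
  rw [emb_val] at this; split at this <;> omega

lemma emb_lt_top (a : Fin (2*n+1)) (x : Fin (2*n)) : emb a x < top n := by
  rw [Fin.lt_def, emb_val]
  have hx := x.isLt
  show _ < 2*n+1
  split <;> omega

lemma lft_lt_top (a : Fin (2*n+1)) : lft a < top n := by
  rw [Fin.lt_def]
  have := a.isLt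
  show (a:ℕ) < 2*n+1
  omega

lemma emb_lt_lft_iff (a : Fin (2*n+1)) (x : Fin (2*n)) :
    emb a x < lft a ↔ x.val < a.val := by
  simp only [Fin.lt_def, emb_val, lft]
  split <;> omega

lemma lft_lt_emb_iff (a : Fin (2*n+1)) (x : Fin (2*n)) :
    lft a < emb a x ↔ a.val ≤ x.val := by
  simp only [Fin.lt_def, emb_val, lft]
  split <;> omega

lemma emb_ne_lft (a : Fin (2*n+1)) (x : Fin (2*n)) : emb a x ≠ lft a := by
  intro h
  have := emb_val a x
  have : (emb a x).val = a.val := by rw [h]; rfl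
  rw [emb_val] at this; split at this <;> omega

lemma emb_surj (a : Fin (2*n+1)) {v : Fin (2*(n+1))} (h1 : v ≠ lft a) (h2 : v ≠ top n) :
    ∃ x, emb a x = v := by
  have hv := v.isLt
  have hne1 : v.val ≠ a.val := fun h => h1 (Fin.ext h)
  have hne2 : v.val ≠ 2*n+1 := fun h => h2 (Fin.ext h)
  by_cases hc : v.val < a.val
  · refine ⟨⟨v.val, by have := a.isLt; omega⟩, ?_⟩
    apply Fin.ext
    rw [emb_val]
    simpa using hc
  · refine ⟨⟨v.val - 1, by omega⟩, ?_⟩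
    apply Fin.ext
    rw [emb_val]
    have : ¬ (v.val - 1 < a.val) := by omega
    simp only [this, if_false]
    omega

noncomputable def ins (a : Fin (2*n+1)) (M : Finset (Finset (Fin (2*n)))) :
    Finset (Finset (Fin (2*(n+1)))) :=
  insert {lft a, top n} (M.image (Finset.image (emb a)))

lemma topPair_not_mem_image (a : Fin (2*n+1)) (M : Finset (Finset (Fin (2*n)))) :
    ({lft a, top n} : Finset (Fin (2*(n+1)))) ∉ M.image (Finset.image (emb a)) := by
  intro h
  obtain ⟨p, _, hp⟩ := Finset.mem_image.mp h
  have : top n ∈ Finset.image (emb a) p := by rw [hp]; simp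
  obtain ⟨x, _, hx⟩ := Finset.mem_image.mp this
  exact emb_ne_top a x hx

/-- pairs in pairing are disjoint -/
lemma pairing_disjoint {k : ℕ} {M : Finset (Finset (Fin (2*k)))} (hM : IsPairing k M)
    {p q : Finset (Fin (2*k))} (hp : p ∈ M) (hq : q ∈ M) (hne : p ≠ q) : Disjoint p q := by
  rw [Finset.disjoint_left]
  intro v hvp hvq
  obtain ⟨r, -, hr⟩ := hM.2 v
  exact hne ((hr p ⟨hp, hvp⟩).trans (hr q ⟨hq, hvq⟩).symm)

lemma ins_isPairing (a : Fin (2*n+1)) {M : Finset (Finset (Fin (2*n)))}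
    (hM : IsPairing n M) : IsPairing (n+1) (ins a M) := by
  constructor
  · intro p hp
    rcases Finset.mem_insert.mp hp with rfl|hp
    · rw [Finset.card_pair (by exact ne_of_lt (lft_lt_top a))]
    · obtain ⟨q, hq, rfl⟩ := Finset.mem_image.mp hp
      rw [Finset.card_image_of_injective _ (emb_inj a)]
      exact hM.1 q hq
  · intro v
    by_cases hv : v = lft a ∨ v = top n
    · refine ⟨{lft a, top n}, ⟨Finset.mem_insert_self _ _, by rcases hv with rfl|rfl <;> simp⟩, ?_⟩
      rintro q ⟨hq, hvq⟩
      rcases Finset.mem_insert.mp hq with rfl|hq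
      · rfl
      · exfalso
        obtain ⟨p, _, rfl⟩ := Finset.mem_image.mp hq
        obtain ⟨x, _, hx⟩ := Finset.mem_image.mp hvq
        rcases hv with rfl|rfl
        · exact emb_ne_lft a x hx
        · exact emb_ne_top a x hx
    · push_neg at hv
      obtain ⟨x, rfl⟩ := emb_surj a hv.1 hv.2
      obtain ⟨p, ⟨hpM, hxp⟩, hp⟩ := hM.2 x
      refine ⟨p.image (emb a), ⟨Finset.mem_insert_of_mem (Finset.mem_image_of_mem _ hpM),
        Finset.mem_image_of_mem _ hxp⟩, ?_⟩
      rintro q ⟨hq, hvq⟩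
      rcases Finset.mem_insert.mp hq with rfl|hq
      · exfalso
        rcases Finset.mem_insert.mp hvq with h|h
        · exact emb_ne_lft a x h
        · exact emb_ne_top a x (Finset.mem_singleton.mp h)
      · obtain ⟨r, hrM, rfl⟩ := Finset.mem_image.mp hq
        obtain ⟨y, hyr, hy⟩ := Finset.mem_image.mp hvq
        have : y = x := emb_inj a hy
        subst this
        rw [hp r ⟨hrM, hyr⟩]

lemma ins_inj (a : Fin (2*n+1)) : Function.Injective (ins (n := n) a) := by
  intro M1 M2 h
  unfold ins at h
  have h1 := topPair_not_mem_image a M1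
  have h2 := topPair_not_mem_image a M2
  have himg : M1.image (Finset.image (emb a)) = M2.image (Finset.image (emb a)) := by
    have := congrArg (fun s => Finset.erase s {lft a, top n}) h
    simpa [Finset.erase_insert h1, Finset.erase_insert h2] using this
  exact Finset.image_injective (Finset.image_injective (emb_inj a)) himg

lemma mem_ne_special (a : Fin (2*n+1)) {M : Finset (Finset (Fin (2*(n+1))))}
    (hM : IsPairing (n+1) M) (hmem : ({lft a, top n} : Finset (Fin (2*(n+1)))) ∈ M)
    {q : Finset (Fin (2*(n+1)))} (hq : q ∈ M) (hne : q ≠ {lft a, top n}) :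
    ∀ v ∈ q, v ≠ lft a ∧ v ≠ top n := by
  intro v hv
  constructor
  · rintro rfl
    obtain ⟨r, -, hr⟩ := hM.2 (lft a)
    exact hne ((hr q ⟨hq, hv⟩).trans (hr _ ⟨hmem, by simp⟩).symm)
  · rintro rfl
    obtain ⟨r, -, hr⟩ := hM.2 (top n)
    exact hne ((hr q ⟨hq, hv⟩).trans (hr _ ⟨hmem, by simp⟩).symm)

lemma ins_surj (a : Fin (2*n+1)) {M : Finset (Finset (Fin (2*(n+1))))}
    (hM : IsPairing (n+1) M) (hmem : ({lft a, top n} : Finset (Fin (2*(n+1)))) ∈ M) :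
    ∃ M', IsPairing n M' ∧ ins a M' = M := by
  set M' : Finset (Finset (Fin (2*n))) :=
    Finset.univ.filter (fun p => p.image (emb a) ∈ M) with hM'def
  have hmemM' : ∀ p, p ∈ M' ↔ p.image (emb a) ∈ M := by
    intro p; simp [hM'def]
  -- every non-special member of M is an image
  have himg : ∀ q ∈ M, q ≠ ({lft a, top n} : Finset (Fin (2*(n+1)))) →
      ∃ p ∈ M', p.image (emb a) = q := by
    intro q hq hne
    refine ⟨Finset.univ.filter (fun x => emb a x ∈ q), ?_, ?_⟩
    · rw [hmemM']
      have : (Finset.univ.filter (fun x => emb a x ∈ q)).image (emb a) = q := by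
        ext v
        simp only [Finset.mem_image, Finset.mem_filter, Finset.mem_univ, true_and]
        constructor
        · rintro ⟨x, hx, rfl⟩; exact hx
        · intro hv
          obtain ⟨hv1, hv2⟩ := mem_ne_special a hM hmem hq hne v hv
          obtain ⟨x, rfl⟩ := emb_surj a hv1 hv2
          exact ⟨x, hv, rfl⟩
      rw [this]; exact hq
    · ext v
      simp only [Finset.mem_image, Finset.mem_filter, Finset.mem_univ, true_and]
      constructor
      · rintro ⟨x, hx, rfl⟩; exact hx
      · intro hv
        obtain ⟨hv1, hv2⟩ := mem_ne_special a hM hmem hq hne v hv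
        obtain ⟨x, rfl⟩ := emb_surj a hv1 hv2
        exact ⟨x, hv, rfl⟩
  have hpair : IsPairing n M' := by
    constructor
    · intro p hp
      rw [hmemM'] at hp
      have := hM.1 _ hp
      rwa [Finset.card_image_of_injective _ (emb_inj a)] at this
    · intro x
      obtain ⟨q, ⟨hqM, hxq⟩, hq⟩ := hM.2 (emb a x)
      have hqne : q ≠ ({lft a, top n} : Finset (Fin (2*(n+1)))) := by
        rintro rfl
        rcases Finset.mem_insert.mp hxq with h|h
        · exact emb_ne_lft a x h
        · exact emb_ne_top a x (Finset.mem_singleton.mp h)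
      obtain ⟨p, hpM', hpq⟩ := himg q hqM hqne
      have hxp : x ∈ p := by
        have : emb a x ∈ p.image (emb a) := hpq ▸ hxq
        obtain ⟨y, hy, hyx⟩ := Finset.mem_image.mp this
        rwa [← emb_inj a hyx]
      refine ⟨p, ⟨hpM', hxp⟩, ?_⟩
      rintro r ⟨hrM', hxr⟩
      apply Finset.image_injective (emb_inj a)
      rw [hmemM'] at hrM' hpM'
      exact (hq _ ⟨hrM', Finset.mem_image_of_mem _ hxr⟩).trans
        (hq _ ⟨hpM', Finset.mem_image_of_mem _ hxp⟩).symm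
  refine ⟨M', hpair, ?_⟩
  unfold ins
  ext q
  simp only [Finset.mem_insert, Finset.mem_image]
  constructor
  · rintro (rfl|⟨p, hp, rfl⟩)
    · exact hmem
    · rw [hmemM'] at hp; exact hp
  · intro hq
    by_cases hne : q = ({lft a, top n} : Finset (Fin (2*(n+1))))
    · exact Or.inl hne
    · obtain ⟨p, hp, hpq⟩ := himg q hq hne
      exact Or.inr ⟨p, hp, hpq⟩

lemma crossNum_eq_sum {k : ℕ} (M : Finset (Finset (Fin (2*k)))) :
    crossNum M = ∑ p ∈ M, ∑ q ∈ M, if CrossOrd p q then 1 else 0 := by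
  unfold crossNum
  rw [Finset.card_filter]
  rw [Finset.sum_product]

lemma cross_special_left (a : Fin (2*n+1)) (q : Finset (Fin (2*(n+1)))) :
    ¬ CrossOrd ({lft a, top n} : Finset (Fin (2*(n+1)))) q := by
  rintro ⟨A, B, C, D, hAB, hCD, hP, hq, h1, h2, h3⟩
  obtain ⟨hA, hB⟩ := pair_eq (lft_lt_top a) hAB hP
  have hD := D.isLt
  have : (top n).val < D.val := hB ▸ h3
  simp only [top] at this
  omega

lemma cross_special_right (a : Fin (2*n+1)) {x y : Fin (2*n)} (hxy : x < y) :
    CrossOrd ({emb a x, emb a y} : Finset (Fin (2*(n+1)))) {lft a, top n} ↔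
      (x.val < a.val ∧ a.val ≤ y.val) := by
  rw [crossOrd_pair_iff (emb_strictMono a hxy) (lft_lt_top a)]
  rw [emb_lt_lft_iff, lft_lt_emb_iff]
  simp [emb_lt_top a y]

lemma cross_image_iff (a : Fin (2*n+1)) {x y x' y' : Fin (2*n)} (h1 : x < y) (h2 : x' < y') :
    CrossOrd ({emb a x, emb a y} : Finset (Fin (2*(n+1)))) {emb a x', emb a y'} ↔
      CrossOrd ({x, y} : Finset (Fin (2*n))) {x', y'} := by
  rw [crossOrd_pair_iff (emb_strictMono a h1) (emb_strictMono a h2),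
    crossOrd_pair_iff h1 h2, emb_lt_iff, emb_lt_iff, emb_lt_iff]

lemma card_filter_val_lt (m t : ℕ) (ht : t ≤ m) :
    (Finset.univ.filter (fun v : Fin m => v.val < t)).card = t := by
  have himg : (Finset.univ.filter (fun v : Fin m => v.val < t)).image Fin.val
      = Finset.range t := by
    ext i
    simp only [Finset.mem_image, Finset.mem_filter, Finset.mem_univ, true_and,
      Finset.mem_range]
    constructor
    · rintro ⟨v, hv, rfl⟩; exact hv
    · intro hi; exact ⟨⟨i, lt_of_lt_of_le hi ht⟩, hi, rfl⟩
  calc (Finset.univ.filter (fun v : Fin m => v.val < t)).card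
      = ((Finset.univ.filter (fun v : Fin m => v.val < t)).image Fin.val).card :=
        (Finset.card_image_of_injective _ Fin.val_injective).symm
    _ = (Finset.range t).card := by rw [himg]
    _ = t := Finset.card_range t

lemma sum_bcnt (a : Fin (2*n+1)) {M : Finset (Finset (Fin (2*n)))}
    (hM : IsPairing n M) :
    ∑ p ∈ M, (p.filter (fun v => v.val < a.val)).card = a.val := by
  have hdisj : ∀ p ∈ M, ∀ q ∈ M, p ≠ q →
      Disjoint (p.filter (fun v => v.val < a.val)) (q.filter (fun v => v.val < a.val)) := by
    intro p hp q hq hne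
    exact Finset.disjoint_filter_filter (pairing_disjoint hM hp hq hne)
  rw [← Finset.card_biUnion hdisj]
  have : M.biUnion (fun p => p.filter (fun v => v.val < a.val))
      = Finset.univ.filter (fun v : Fin (2*n) => v.val < a.val) := by
    ext v
    simp only [Finset.mem_biUnion, Finset.mem_filter, Finset.mem_univ, true_and]
    constructor
    · rintro ⟨p, hp, hv, hv2⟩; exact hv2
    · intro hv
      obtain ⟨p, ⟨hpM, hvp⟩, -⟩ := hM.2 v
      exact ⟨p, hpM, hvp, hv⟩
  rw [this, card_filter_val_lt]
  have := a.isLt; omega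

lemma crossNum_ins (a : Fin (2*n+1)) {M : Finset (Finset (Fin (2*n)))}
    (hM : IsPairing n M) :
    crossNum (ins a M) % 2 = (crossNum M + a.val) % 2 := by
  classical
  set P : Finset (Fin (2*(n+1))) := {lft a, top n} with hP
  set S : Finset (Finset (Fin (2*(n+1)))) := M.image (Finset.image (emb a)) with hS
  have hPS : P ∉ S := topPair_not_mem_image a M
  have hinj : Set.InjOn (Finset.image (emb a)) M :=
    fun p _ q _ h => Finset.image_injective (emb_inj a) h
  -- positioning sums
  have key : crossNum (ins a M) =
      crossNum M + ∑ p ∈ M, (if CrossOrd (p.image (emb a)) P then 1 else 0) := by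
    rw [crossNum_eq_sum, crossNum_eq_sum]
    show ∑ p ∈ insert P S, ∑ q ∈ insert P S, (if CrossOrd p q then 1 else 0) = _
    rw [Finset.sum_insert hPS]
    have hz : ∑ q ∈ insert P S, (if CrossOrd P q then (1:ℕ) else 0) = 0 :=
      Finset.sum_eq_zero (fun q _ => by exact if_neg (cross_special_left a q))
    rw [hz, zero_add]
    have hsplit : ∀ p ∈ S, ∑ q ∈ insert P S, (if CrossOrd p q then (1:ℕ) else 0)
        = (if CrossOrd p P then 1 else 0) + ∑ q ∈ S, (if CrossOrd p q then 1 else 0) :=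
      fun p _ => Finset.sum_insert hPS
    rw [Finset.sum_congr rfl hsplit, Finset.sum_add_distrib]
    rw [Finset.sum_image (fun p hp q hq h => hinj hp hq h),
      Finset.sum_image (fun p hp q hq h => hinj hp hq h)]
    have hcongr : ∀ p ∈ M, ∑ q ∈ S, (if CrossOrd (p.image (emb a)) q then (1:ℕ) else 0)
        = ∑ q ∈ M, (if CrossOrd p q then 1 else 0) := by
      intro p hp
      rw [hS, Finset.sum_image (fun p hp q hq h => hinj hp hq h)]
      apply Finset.sum_congr rfl
      intro q hq
      obtain ⟨x, y, hxy, rfl⟩ := exists_pair_lt (hM.1 p hp)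
      obtain ⟨x', y', hxy', rfl⟩ := exists_pair_lt (hM.1 q hq)
      rw [Finset.image_insert, Finset.image_singleton,
        Finset.image_insert, Finset.image_singleton]
      rw [cross_image_iff a hxy hxy']
    rw [Finset.sum_congr rfl hcongr]
    ring
  rw [key, Nat.add_mod, Nat.add_mod (crossNum M) a.val]
  congr 1
  congr 1
  -- parity of the straddle count
  have hb : ∀ p ∈ M, (if CrossOrd (p.image (emb a)) P then (1:ℕ) else 0)
      = (p.filter (fun v => v.val < a.val)).card % 2 := by
    intro p hp
    obtain ⟨x, y, hxy, rfl⟩ := exists_pair_lt (hM.1 p hp)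
    rw [Finset.image_insert, Finset.image_singleton, hP, cross_special_right a hxy]
    have hxyne : x ≠ y := ne_of_lt hxy
    have hxyval : x.val < y.val := hxy
    rw [Finset.filter_insert, Finset.filter_singleton]
    by_cases h1 : x.val < a.val <;> by_cases h2 : y.val < a.val <;>
      simp [h1, h2, hxyne] <;> omega
  rw [Finset.sum_congr rfl hb, ← Finset.sum_nat_mod, sum_bcnt a hM]

noncomputable def Cnt (r k : ℕ) : ℕ :=
  ((Finset.univ : Finset (Finset (Finset (Fin (2*k))))).filter
    (fun M => IsPairing k M ∧ crossNum M % 2 = r)).card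

lemma nplus_eq_cnt (k : ℕ) : Nplus k = Cnt 0 k := by
  unfold Nplus Cnt
  congr 1
  apply Finset.filter_congr
  intro M _
  rw [Nat.even_iff]

lemma nminus_eq_cnt (k : ℕ) : Nminus k = Cnt 1 k := by
  unfold Nminus Cnt
  congr 1
  apply Finset.filter_congr
  intro M _
  rw [Nat.odd_iff]

lemma fiber_card (a : Fin (2*n+1)) (r : ℕ) :
    ((Finset.univ : Finset (Finset (Finset (Fin (2*(n+1)))))).filter
      (fun M => IsPairing (n+1) M ∧ crossNum M % 2 = r ∧
        ({lft a, top n} : Finset (Fin (2*(n+1)))) ∈ M)).card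
    = ((Finset.univ : Finset (Finset (Finset (Fin (2*n))))).filter
      (fun M' => IsPairing n M' ∧ (crossNum M' + a.val) % 2 = r)).card := by
  symm
  apply Finset.card_bij (fun M' _ => ins a M')
  · intro M' hM'
    obtain ⟨-, h1, h2⟩ := Finset.mem_filter.mp hM'
    refine Finset.mem_filter.mpr ⟨Finset.mem_univ _, ins_isPairing a h1, ?_, Finset.mem_insert_self _ _⟩
    rw [crossNum_ins a h1, h2]
  · intro M1 h1 M2 h2 h
    exact ins_inj a h
  · intro M hMf
    obtain ⟨-, h1, h2, h3⟩ := Finset.mem_filter.mp hMf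
    obtain ⟨M', hpair, hins⟩ := ins_surj a h1 h3
    refine ⟨M', Finset.mem_filter.mpr ⟨Finset.mem_univ _, hpair, ?_⟩, hins⟩
    rw [← crossNum_ins a hpair, hins, h2]

lemma count_split (r : ℕ) :
    Cnt r (n+1) = ∑ a : Fin (2*n+1),
      ((Finset.univ : Finset (Finset (Finset (Fin (2*(n+1)))))).filter
        (fun M => IsPairing (n+1) M ∧ crossNum M % 2 = r ∧
          ({lft a, top n} : Finset (Fin (2*(n+1)))) ∈ M)).card := by
  unfold Cnt
  rw [← Finset.card_biUnion]
  · congr 1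
    ext M
    simp only [Finset.mem_biUnion, Finset.mem_filter, Finset.mem_univ, true_and]
    constructor
    · rintro ⟨h1, h2⟩
      obtain ⟨p, ⟨hpM, htop⟩, -⟩ := h1.2 (top n)
      obtain ⟨x, y, hxy, rfl⟩ := exists_pair_lt (h1.1 p hpM)
      have hy : y = top n := by
        rcases Finset.mem_insert.mp htop with h|h
        · exfalso
          have h5 : (top n).val < y.val := h ▸ hxy
          rw [show (top n).val = 2*n+1 from rfl] at h5
          have := y.isLt
          omega
        · exact (Finset.mem_singleton.mp h).symm
      subst hy
      have hxv : x.val < 2*n+1 := by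
        have h5 : x.val < (top n).val := hxy
        rwa [show (top n).val = 2*n+1 from rfl] at h5
      refine ⟨⟨x.val, hxv⟩, h1, h2, ?_⟩
      have : lft ⟨x.val, hxv⟩ = x := Fin.ext rfl
      rw [this]
      exact hpM
    · rintro ⟨a, h1, h2, -⟩
      exact ⟨h1, h2⟩
  · intro a _ b _ hab
    rw [Function.onFun, Finset.disjoint_left]
    intro M hMa hMb
    obtain ⟨-, h1, -, h3⟩ := Finset.mem_filter.mp hMa
    obtain ⟨-, -, -, h4⟩ := Finset.mem_filter.mp hMb
    obtain ⟨q, -, hq⟩ := h1.2 (top n)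
    have e1 := hq _ ⟨h3, by simp⟩
    have e2 := hq _ ⟨h4, by simp⟩
    have : ({lft a, top n} : Finset (Fin (2*(n+1)))) = {lft b, top n} := e1.trans e2.symm
    obtain ⟨hl, -⟩ := pair_eq (lft_lt_top a) (lft_lt_top b) this
    have hv : (lft a).val = (lft b).val := congrArg Fin.val hl
    exact hab (Fin.ext hv)

lemma sum_parity (m X Y : ℕ) :
    ∑ i ∈ Finset.range (2*m+1), (if i % 2 = 0 then X else Y) = (m+1)*X + m*Y := by
  induction m with
  | zero => simp
  | succ m ih =>
    have h : 2*(m+1)+1 = (2*m+1) + 1 + 1 := by ring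
    rw [h, Finset.sum_range_succ, Finset.sum_range_succ, ih]
    have h1 : (2*m+1) % 2 = 1 := by omega
    have h2 : (2*m+1+1) % 2 = 0 := by omega
    rw [h1, h2]
    simp only [if_pos rfl]
    norm_num
    ring

lemma main_rec (n r : ℕ) (hr : r < 2) :
    Cnt r (n+1) = (n+1) * Cnt r n + n * Cnt ((r+1) % 2) n := by
  rw [count_split]
  have step : ∀ a : Fin (2*n+1),
      ((Finset.univ : Finset (Finset (Finset (Fin (2*(n+1)))))).filter
        (fun M => IsPairing (n+1) M ∧ crossNum M % 2 = r ∧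
          ({lft a, top n} : Finset (Fin (2*(n+1)))) ∈ M)).card
      = if a.val % 2 = 0 then Cnt r n else Cnt ((r+1) % 2) n := by
    intro a
    rw [fiber_card a r]
    by_cases hpar : a.val % 2 = 0
    · rw [if_pos hpar]
      unfold Cnt
      congr 1
      apply Finset.filter_congr
      intro M _
      constructor
      · rintro ⟨h1, h2⟩; exact ⟨h1, by omega⟩
      · rintro ⟨h1, h2⟩; exact ⟨h1, by omega⟩
    · rw [if_neg hpar]
      unfold Cnt
      congr 1
      apply Finset.filter_congr
      intro M _
      constructor
      · rintro ⟨h1, h2⟩; exact ⟨h1, by omega⟩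
      · rintro ⟨h1, h2⟩; exact ⟨h1, by omega⟩
  rw [Finset.sum_congr rfl (fun a _ => step a)]
  rw [Fin.sum_univ_eq_sum_range (fun i => if i % 2 = 0 then Cnt r n else Cnt ((r+1) % 2) n)]
  exact sum_parity n _ _

end PairRec

theorem pairing_crossing_recursion (k : ℕ) (hk : 2 ≤ k) :
    Nplus k = k * Nplus (k-1) + (k-1) * Nminus (k-1) ∧
    Nminus k = k * Nminus (k-1) + (k-1) * Nplus (k-1) := by
  obtain ⟨n, rfl⟩ : ∃ n, k = n + 1 := ⟨k - 1, by omega⟩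
  simp only [Nat.add_sub_cancel]
  constructor
  · rw [PairRec.nplus_eq_cnt, PairRec.nplus_eq_cnt, PairRec.nminus_eq_cnt]
    simpa using PairRec.main_rec n 0 (by omega)
  · rw [PairRec.nminus_eq_cnt, PairRec.nminus_eq_cnt, PairRec.nplus_eq_cnt]
    simpa using PairRec.main_rec n 1 (by omega)
end

section
/- Let M, N ≥ 1 and for 0 ≤ p < M, 0 ≤ q < N set ω_p = 2πp/M, ω_q = 2πq/N. For x real with |x| < √2 − 1, define the 4×4 matrix B(p,q) whose rows are indexed by directions with entries B = [[e^{iω_p}, e^{iω_p+iπ/4}, 0, e^{iω_p−iπ/4}], [e^{iω_q−iπ/4}, e^{iω_q}, e^{iω_q+iπ/4}, 0], [0, e^{−iω_p−iπ/4}, e^{−iω_p}, e^{−iω_p+iπ/4}], [e^{−iω_q+iπ/4}, 0, e^{−iω_q−iπ/4}, e^{−iω_q}]]. Then det(I − x·B(p,q)) = (1+x²)² − 2x(1−x²)(cos ω_p + cos ω_q). -/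
open Complex

/-- The Fourier block of the Kac–Ward transition matrix on the torus, for
frequencies `ω_p`, `ω_q`. -/
noncomputable def fourierBlock (ωp ωq : ℝ) : Matrix (Fin 4) (Fin 4) ℂ :=
  !![Complex.exp (I * ωp), Complex.exp (I * (ωp + Real.pi/4)), 0,
       Complex.exp (I * (ωp - Real.pi/4));
     Complex.exp (I * (ωq - Real.pi/4)), Complex.exp (I * ωq),
       Complex.exp (I * (ωq + Real.pi/4)), 0;
     0, Complex.exp (I * (-ωp - Real.pi/4)), Complex.exp (I * (-ωp)),
       Complex.exp (I * (-ωp + Real.pi/4));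
     Complex.exp (I * (-ωq + Real.pi/4)), 0, Complex.exp (I * (-ωq - Real.pi/4)),
       Complex.exp (I * (-ωq))]

set_option maxHeartbeats 1600000 in
lemma my_det_fin_four (A : Matrix (Fin 4) (Fin 4) ℂ) :
    A.det =
      A 0 0 * A 1 1 * A 2 2 * A 3 3 - A 0 0 * A 1 1 * A 2 3 * A 3 2 -
        A 0 0 * A 1 2 * A 2 1 * A 3 3 + A 0 0 * A 1 2 * A 2 3 * A 3 1 +
        A 0 0 * A 1 3 * A 2 1 * A 3 2 - A 0 0 * A 1 3 * A 2 2 * A 3 1 -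
        A 0 1 * A 1 0 * A 2 2 * A 3 3 + A 0 1 * A 1 0 * A 2 3 * A 3 2 +
        A 0 1 * A 1 2 * A 2 0 * A 3 3 - A 0 1 * A 1 2 * A 2 3 * A 3 0 -
        A 0 1 * A 1 3 * A 2 0 * A 3 2 + A 0 1 * A 1 3 * A 2 2 * A 3 0 +
        A 0 2 * A 1 0 * A 2 1 * A 3 3 - A 0 2 * A 1 0 * A 2 3 * A 3 1 -
        A 0 2 * A 1 1 * A 2 0 * A 3 3 + A 0 2 * A 1 1 * A 2 3 * A 3 0 +
        A 0 2 * A 1 3 * A 2 0 * A 3 1 - A 0 2 * A 1 3 * A 2 1 * A 3 0 -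
        A 0 3 * A 1 0 * A 2 1 * A 3 2 + A 0 3 * A 1 0 * A 2 2 * A 3 1 +
        A 0 3 * A 1 1 * A 2 0 * A 3 2 - A 0 3 * A 1 1 * A 2 2 * A 3 0 -
        A 0 3 * A 1 2 * A 2 0 * A 3 1 + A 0 3 * A 1 2 * A 2 1 * A 3 0 := by
  simp [Matrix.det_succ_row_zero, Fin.sum_univ_succ,
    show (Fin.succ 2 : Fin 4) = 3 from rfl,
    show Fin.succAbove (2 : Fin 4) 2 = 3 from rfl,
    show Fin.succAbove (1 : Fin 4) 2 = 3 from rfl,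
    show Fin.succAbove (0 : Fin 4) 2 = 3 from rfl,
    show Fin.succAbove (3 : Fin 4) 2 = 2 from rfl,
    show (Fin.castSucc 2 : Fin 4) = 2 from rfl]
  ring

set_option maxHeartbeats 3200000 in
lemma key (a a' b b' u u' x : ℂ) (haA : a * a' = 1) (hbB : b * b' = 1)
    (huU : u * u' = 1) (hu : u ^ 2 = I) (hU4 : u' ^ 4 = -1) :
    (1 - x • !![a, a*u, 0, a*u';
                b*u', b, b*u, 0;
                0, a'*u', a', a'*u;
                b'*u, 0, b'*u', b'] : Matrix (Fin 4) (Fin 4) ℂ).det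
      = (1 + x ^ 2) ^ 2 - x * (1 - x ^ 2) * ((a + a') + (b + b')) := by
  have hM : (1 - x • !![a, a*u, 0, a*u';
                b*u', b, b*u, 0;
                0, a'*u', a', a'*u;
                b'*u, 0, b'*u', b'] : Matrix (Fin 4) (Fin 4) ℂ)
      = !![1 - x*a, -(x*(a*u)), 0, -(x*(a*u'));
           -(x*(b*u')), 1 - x*b, -(x*(b*u)), 0;
           0, -(x*(a'*u')), 1 - x*a', -(x*(a'*u));
           -(x*(b'*u)), 0, -(x*(b'*u')), 1 - x*b'] := by
    ext i j
    fin_cases i <;> fin_cases j <;>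
      simp [Matrix.one_apply, Matrix.sub_apply, Matrix.smul_apply]
  rw [hM, my_det_fin_four]
  norm_num [Matrix.cons_val_zero, Matrix.cons_val_one, Matrix.cons_val_two,
    Matrix.cons_val_three, Matrix.head_cons, Matrix.tail_cons]
  linear_combination
    ((x ^ 2) + (-b' * x ^ 3) + (2 * b' * u * u' * x ^ 3) + (-b * x ^ 3) + (2 * b * u * u' * x ^ 3) + (b * b' * x ^ 4) + (-b * b' * u' ^ 4 * x ^ 4) + (-4 * b * b' * u * u' * x ^ 4) + (2 * b * b' * u ^ 2 * u' ^ 2 * x ^ 4) + (-b * b' * u ^ 4 * x ^ 4)) * haA +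
    ((x ^ 2) + (x ^ 4) + (-u' ^ 4 * x ^ 4) + (-4 * u * u' * x ^ 4) + (2 * u ^ 2 * u' ^ 2 * x ^ 4) + (-u ^ 4 * x ^ 4) + (-a' * x ^ 3) + (2 * a' * u * u' * x ^ 3) + (-a * x ^ 3) + (2 * a * u * u' * x ^ 3)) * hbB +
    ((-2 * x ^ 4) + (2 * u * u' * x ^ 4) + (2 * b' * x ^ 3) + (2 * b * x ^ 3) + (2 * a' * x ^ 3) + (-a' * b' * x ^ 2) + (-a' * b * x ^ 2) + (2 * a * x ^ 3) + (-a * b' * x ^ 2) + (-a * b * x ^ 2)) * huU +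
    ((-Complex.I * x ^ 4) + (-u ^ 2 * x ^ 4)) * hu +
    (-x ^ 4) * Complex.I_sq +
    (-x ^ 4) * hU4

lemma fourierBlock_eq (ωp ωq : ℝ) :
    fourierBlock ωp ωq =
      !![Complex.exp (I * ωp), Complex.exp (I * ωp) * Complex.exp (I * (Real.pi/4 : ℝ)), 0,
           Complex.exp (I * ωp) * Complex.exp (I * (-(Real.pi/4) : ℝ));
         Complex.exp (I * ωq) * Complex.exp (I * (-(Real.pi/4) : ℝ)), Complex.exp (I * ωq),
           Complex.exp (I * ωq) * Complex.exp (I * (Real.pi/4 : ℝ)), 0;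
         0, Complex.exp (I * (-ωp : ℝ)) * Complex.exp (I * (-(Real.pi/4) : ℝ)),
           Complex.exp (I * (-ωp : ℝ)),
           Complex.exp (I * (-ωp : ℝ)) * Complex.exp (I * (Real.pi/4 : ℝ));
         Complex.exp (I * (-ωq : ℝ)) * Complex.exp (I * (Real.pi/4 : ℝ)), 0,
           Complex.exp (I * (-ωq : ℝ)) * Complex.exp (I * (-(Real.pi/4) : ℝ)),
           Complex.exp (I * (-ωq : ℝ))] := by
  unfold fourierBlock
  ext i j
  fin_cases i <;> fin_cases j <;>
    · simp only [← Complex.exp_add]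
      push_cast
      ring_nf

lemma exp_sq_I : (Complex.exp (I * (Real.pi/4 : ℝ))) ^ 2 = I := by
  rw [← Complex.exp_nat_mul]
  have h : (2 : ℕ) * (I * ((Real.pi/4 : ℝ) : ℂ)) = ((Real.pi/2 : ℝ) : ℂ) * I := by
    push_cast; ring
  rw [h, Complex.exp_mul_I]
  simp [← Complex.ofReal_cos, ← Complex.ofReal_sin, Real.cos_pi_div_two, Real.sin_pi_div_two]

lemma exp_pow_four : (Complex.exp (I * (-(Real.pi/4) : ℝ))) ^ 4 = -1 := by
  rw [← Complex.exp_nat_mul]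
  have h : (4 : ℕ) * (I * ((-(Real.pi/4) : ℝ) : ℂ)) = ((-Real.pi : ℝ) : ℂ) * I := by
    push_cast; ring
  rw [h, Complex.exp_mul_I]
  simp [← Complex.ofReal_cos, ← Complex.ofReal_sin, Real.cos_neg, Real.sin_neg,
    Real.cos_pi, Real.sin_pi]

lemma exp_add_exp_neg (ω : ℝ) :
    Complex.exp (I * ω) + Complex.exp (I * ((-ω : ℝ) : ℂ)) = 2 * (Real.cos ω : ℂ) := by
  rw [mul_comm I, mul_comm I, Complex.exp_mul_I, Complex.exp_mul_I]
  push_cast [Real.cos_neg, Real.sin_neg]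
  simp [Complex.cos_neg, Complex.sin_neg]
  ring

lemma exp_mul_exp_neg (ω : ℝ) :
    Complex.exp (I * ω) * Complex.exp (I * ((-ω : ℝ) : ℂ)) = 1 := by
  rw [← Complex.exp_add]
  have h : I * (ω : ℂ) + I * ((-ω : ℝ) : ℂ) = 0 := by push_cast; ring
  rw [h, Complex.exp_zero]

/-- Determinant identity for the Fourier blocks:
`det(I − x·B(p,q)) = (1+x²)² − 2x(1−x²)(cos ω_p + cos ω_q)`. -/
theorem fourierBlock_det (M N : ℕ) (hM : 1 ≤ M) (hN : 1 ≤ N)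
    (p q : ℕ) (hp : p < M) (hq : q < N) (x : ℝ)
    (hx : |x| < Real.sqrt 2 - 1) :
    (1 - (x : ℂ) • fourierBlock (2 * Real.pi * p / M) (2 * Real.pi * q / N)).det
      = (((1 + x ^ 2) ^ 2
          - 2 * x * (1 - x ^ 2) *
            (Real.cos (2 * Real.pi * p / M) + Real.cos (2 * Real.pi * q / N)) : ℝ) : ℂ) := by
  set ωp : ℝ := 2 * Real.pi * p / M with hωp
  set ωq : ℝ := 2 * Real.pi * q / N with hωq
  rw [fourierBlock_eq, key _ _ _ _ _ _ _ (exp_mul_exp_neg ωp) (exp_mul_exp_neg ωq)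
    (exp_mul_exp_neg (Real.pi/4)) exp_sq_I exp_pow_four]
  have h1 := exp_add_exp_neg ωp
  have h2 := exp_add_exp_neg ωq
  push_cast [mul_neg] at h1 h2 ⊢
  linear_combination (-(x : ℂ) * (1 - (x:ℂ)^2)) * h1 + (-(x : ℂ) * (1 - (x:ℂ)^2)) * h2
end
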